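/- If φ is analytic near 0 with φ(0) = 0 and φ'(t) = cos(ψ(t))/cos(2a·ψ(t)), where ψ is analytic near 0 with ψ(0) = 0 and sin ψ = κ·sin φ, then the function d = cos ψ satisfies cos²(2aψ)·(d')² = (1 - d²)(d² - λ²), where λ² = 1 - κ². -/

import Mathlib

open Complex

private lemma analyticAt_ccos' {f : ℂ → ℂ} {x : ℂ} (hf : AnalyticAt ℂ f x) :
    AnalyticAt ℂ (fun z => Complex.cos (f z)) x := by
  have h : (fun z => Complex.cos (f z))
      = fun z => (Complex.exp (f z * I) + Complex.exp (-(f z) * I)) / 2 := by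
    funext z
    have := Complex.two_cos (f z)
    rw [eq_div_iff (two_ne_zero' ℂ)]
    linear_combination this
  rw [h]
  exact (((hf.mul analyticAt_const).cexp.add (hf.neg.mul analyticAt_const).cexp)).div
    analyticAt_const two_ne_zero

/-- If `φ` is analytic near `0` with `φ 0 = 0` and `φ' = cos ψ / cos (2aψ)`, where `ψ` is
analytic near `0` with `ψ 0 = 0` and `sin ψ = κ sin φ`, then `d = cos ψ` satisfies
`cos²(2aψ) (d')² = (1 - d²)(d² - λ²)` where `λ² = 1 - κ²`. -/
theorem d_diff_eq (κ lam : ℝ) (hκ : κ ∈ Set.Ioo (0 : ℝ) 1) (hlam : lam ^ 2 = 1 - κ ^ 2)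
    (a : ℂ) (U : Set ℂ) (hU : IsOpen U) (hUc : IsPreconnected U) (h0 : (0 : ℂ) ∈ U)
    (φ ψ : ℂ → ℂ) (hφ : ∀ z ∈ U, AnalyticAt ℂ φ z) (hψ : ∀ z ∈ U, AnalyticAt ℂ ψ z)
    (hφ0 : φ 0 = 0) (hψ0 : ψ 0 = 0)
    (hφ' : ∀ z ∈ U, deriv φ z = Complex.cos (ψ z) / Complex.cos (2 * a * ψ z))
    (hsin : ∀ z ∈ U, Complex.sin (ψ z) = (κ : ℂ) * Complex.sin (φ z)) :
    ∀ z ∈ U, Complex.cos (2 * a * ψ z) ^ 2 *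
        (deriv (fun w => Complex.cos (ψ w)) z) ^ 2 =
      (1 - Complex.cos (ψ z) ^ 2) * (Complex.cos (ψ z) ^ 2 - (lam : ℂ) ^ 2) := by
  have hUmem : ∀ᶠ z in nhds 0, z ∈ U := hU.mem_nhds h0
  -- cos(2aψ) ≠ 0 near 0
  have hcψ : ContinuousAt ψ 0 := (hψ 0 h0).continuousAt
  have hC0 : ContinuousAt (fun z => Complex.cos (2 * a * ψ z)) 0 :=
    (Complex.continuous_cos.continuousAt).comp ((continuousAt_const.mul hcψ))
  have hCne : ∀ᶠ z in nhds 0, Complex.cos (2 * a * ψ z) ≠ 0 := by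
    apply hC0.eventually_ne
    simp [hψ0]
  have hDne : ∀ᶠ z in nhds 0, Complex.cos (ψ z) ≠ 0 := by
    apply ((Complex.continuous_cos.continuousAt).comp hcψ).eventually_ne
    simp [hψ0]
  -- analyticity facts
  have hC : AnalyticOnNhd ℂ (fun z => Complex.cos (2 * a * ψ z)) U := fun z hz =>
    analyticAt_ccos' (analyticAt_const.mul (hψ z hz))
  have hD : AnalyticOnNhd ℂ (fun z => Complex.cos (ψ z)) U := fun z hz =>
    analyticAt_ccos' (hψ z hz)
  have hCφ : AnalyticOnNhd ℂ (fun z => Complex.cos (φ z)) U := fun z hz =>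
    analyticAt_ccos' (hφ z hz)
  -- Step 1 : cos(2aψ) * φ' = cos ψ on U
  have step1 : Set.EqOn (fun z => Complex.cos (2 * a * ψ z) * deriv φ z)
      (fun z => Complex.cos (ψ z)) U := by
    apply AnalyticOnNhd.eqOn_of_preconnected_of_eventuallyEq
      (fun z hz => (hC z hz).mul (AnalyticOnNhd.deriv hφ z hz)) hD hUc h0
    filter_upwards [hCne, hUmem] with z hz hzU
    simp only [Pi.mul_apply]
    rw [hφ' z hzU, mul_div_cancel₀ _ hz]
  -- derivative of sin ψ = κ sin φ
  have hψd : ∀ z ∈ U, Complex.cos (ψ z) * deriv ψ z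
      = (κ : ℂ) * (Complex.cos (φ z) * deriv φ z) := by
    intro z hz
    have h1 : HasDerivAt (fun w => Complex.sin (ψ w)) (Complex.cos (ψ z) * deriv ψ z) z :=
      ((hψ z hz).differentiableAt.hasDerivAt).csin
    have h2 : HasDerivAt (fun w => (κ : ℂ) * Complex.sin (φ w))
        ((κ : ℂ) * (Complex.cos (φ z) * deriv φ z)) z :=
      (((hφ z hz).differentiableAt.hasDerivAt).csin).const_mul _
    have heq : (fun w => Complex.sin (ψ w)) =ᶠ[nhds z]
        fun w => (κ : ℂ) * Complex.sin (φ w) :=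
      Filter.eventuallyEq_of_mem (hU.mem_nhds hz) hsin
    exact h1.unique (h2.congr_of_eventuallyEq heq)
  -- Step 2 : cos(2aψ) * ψ' = κ cos φ on U
  have step2 : Set.EqOn (fun z => Complex.cos (2 * a * ψ z) * deriv ψ z)
      (fun z => (κ : ℂ) * Complex.cos (φ z)) U := by
    apply AnalyticOnNhd.eqOn_of_preconnected_of_eventuallyEq
      (fun z hz => (hC z hz).mul (AnalyticOnNhd.deriv hψ z hz))
      (fun z hz => analyticAt_const.mul (hCφ z hz)) hUc h0
    filter_upwards [hDne, hUmem] with z hz hzU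
    have h3 := hψd z hzU
    have h4 := step1 hzU
    simp only at h4
    -- cos ψ * (cos(2aψ) * ψ') = κ cos φ * (cos(2aψ) * φ') = κ cos φ * cos ψ
    have : Complex.cos (ψ z) * (Complex.cos (2 * a * ψ z) * deriv ψ z)
        = Complex.cos (ψ z) * ((κ : ℂ) * Complex.cos (φ z)) := by
      calc Complex.cos (ψ z) * (Complex.cos (2 * a * ψ z) * deriv ψ z)
          = Complex.cos (2 * a * ψ z) * (Complex.cos (ψ z) * deriv ψ z) := by ring
        _ = Complex.cos (2 * a * ψ z) * ((κ : ℂ) * (Complex.cos (φ z) * deriv φ z)) := by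
            rw [h3]
        _ = (κ : ℂ) * Complex.cos (φ z) * (Complex.cos (2 * a * ψ z) * deriv φ z) := by ring
        _ = Complex.cos (ψ z) * ((κ : ℂ) * Complex.cos (φ z)) := by rw [h4]; ring
    exact mul_left_cancel₀ hz this
  -- final computation
  intro z hz
  have hder : deriv (fun w => Complex.cos (ψ w)) z
      = -Complex.sin (ψ z) * deriv ψ z :=
    (((hψ z hz).differentiableAt.hasDerivAt).ccos).deriv
  rw [hder]
  have h1 : Complex.cos (2 * a * ψ z) * deriv ψ z = (κ : ℂ) * Complex.cos (φ z) := step2 hz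
  have h2 : Complex.sin (ψ z) = (κ : ℂ) * Complex.sin (φ z) := hsin z hz
  have h3 : Complex.sin (φ z) ^ 2 + Complex.cos (φ z) ^ 2 = 1 := Complex.sin_sq_add_cos_sq _
  have h4 : Complex.sin (ψ z) ^ 2 + Complex.cos (ψ z) ^ 2 = 1 := Complex.sin_sq_add_cos_sq _
  have h5 : (lam : ℂ) ^ 2 = 1 - (κ : ℂ) ^ 2 := by
    have := congrArg (fun t : ℝ => (t : ℂ)) hlam
    push_cast at this
    exact this
  set C := Complex.cos (2 * a * ψ z)
  set P := deriv ψ z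
  set S := Complex.sin (ψ z)
  set D := Complex.cos (ψ z)
  set L := (lam : ℂ)
  set cφ := Complex.cos (φ z)
  set sφ := Complex.sin (φ z)
  linear_combination S ^ 2 * (C * P + (κ : ℂ) * cφ) * h1 + S ^ 2 * (S + (κ : ℂ) * sφ) * h2
    + (κ : ℂ) ^ 2 * S ^ 2 * h3 + (D ^ 2 - S ^ 2 - L ^ 2) * h4 + S ^ 2 * h5
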